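/- Let $W_0 = -z_1 z_2 \cdots z_n \in \C[z_1, \ldots, z_n]$. Consider the Koszul-type complex $K(dW_0) = (\C[z_1,\ldots,z_n] \otimes \Lambda^\bullet(\theta_1, \ldots, \theta_n), \iota_{dW_0})$ where $\iota_{dW_0}$ is contraction of the exterior algebra generators against the differential $dW_0 = \sum_i \partial_i W_0 \, dz_i$. Then the kernel of $\iota_{dW_0}$ is contained in the image of the algebra map $f: \C[z_1,\ldots,z_n] \otimes \Lambda^\bullet(u_1,\ldots,u_n) \to \C[z_1,\ldots,z_n] \otimes \Lambda^\bullet(\theta_1,\ldots,\theta_n)$ defined by $f(z_i) = z_i$, $f(u_i) = z_i \theta_i$. -/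

import Mathlib

open ExteriorAlgebra

noncomputable section

set_option synthInstance.maxHeartbeats 1000000
set_option maxHeartbeats 1000000

/-- The coefficient ring `ℂ[z_1,…,z_n]`. -/
abbrev PolyR (n : ℕ) := MvPolynomial (Fin n) ℂ

/-- The algebra `ℂ[z_1,…,z_n][θ_1,…,θ_n]`: the exterior algebra over `ℂ[z]` on `n`
odd generators. -/
abbrev ExtE (n : ℕ) := ExteriorAlgebra (PolyR n) (Fin n → PolyR n)

/-- `W₀ = -z_1 ⋯ z_n`. -/
def Wzero (n : ℕ) : PolyR n := - ∏ i, MvPolynomial.X i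

/-- The dual vector `dW₀`, pairing `θ_i` with `∂_i W₀`. -/
def dWdual (n : ℕ) : Module.Dual (PolyR n) (Fin n → PolyR n) :=
  ∑ i, MvPolynomial.pderiv i (Wzero n) •
    (LinearMap.proj i : (Fin n → PolyR n) →ₗ[PolyR n] PolyR n)

/-- Contraction `ι_{dW₀}` on `ℂ[z][θ]`, the odd derivation with `θ_i ↦ ∂_i W₀`. -/
def iotaDW (n : ℕ) : ExtE n →ₗ[PolyR n] ExtE n :=
  CliffordAlgebra.contractLeft (dWdual n)

/-- The algebra map `f : ℂ[z][u] → ℂ[z][θ]` with `f(z_i) = z_i`, `f(u_i) = z_i θ_i`. -/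
def fMap (n : ℕ) : ExtE n →ₐ[PolyR n] ExtE n :=
  ExteriorAlgebra.lift (PolyR n)
    ⟨(ExteriorAlgebra.ι (PolyR n)).comp
        (LinearMap.pi fun i => (MvPolynomial.X i : PolyR n) •
          (LinearMap.proj i : (Fin n → PolyR n) →ₗ[PolyR n] PolyR n)),
      fun m => ExteriorAlgebra.ι_sq_zero _⟩

namespace KAux

section Poly
open MvPolynomial
variable {n : ℕ}
/-- kill the variable i -/
def g (i : Fin n) : PolyR n →ₐ[ℂ] PolyR n :=
  MvPolynomial.aeval (fun k => if k = i then 0 else MvPolynomial.X k)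

lemma g_X_self (i : Fin n) : g i (X i) = 0 := by simp [g]

lemma g_X_ne {i j : Fin n} (h : j ≠ i) : g i (X j) = X j := by simp [g, h]

lemma X_dvd_sub_g (i : Fin n) (p : PolyR n) : X i ∣ p - g i p := by
  induction p using MvPolynomial.induction_on with
  | C a => simp [g]
  | add p q hp hq =>
      have : p + q - g i (p + q) = (p - g i p) + (q - g i q) := by ring_nf; rw [map_add]; ring
      rw [this]; exact dvd_add hp hq
  | mul_X p j hp =>
      rcases eq_or_ne j i with rfl | hji
      · rw [map_mul, g_X_self, mul_zero, sub_zero]; exact Dvd.intro_left p rfl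
      · have : p * X j - g i (p * X j) = (p - g i p) * X j := by
          rw [map_mul, g_X_ne hji]; ring
        rw [this]; exact hp.mul_right _

lemma X_dvd_iff_g {i : Fin n} {p : PolyR n} : X i ∣ p ↔ g i p = 0 := by
  constructor
  · rintro ⟨q, rfl⟩; rw [map_mul, g_X_self, zero_mul]
  · intro h
    have := X_dvd_sub_g i p
    rwa [h, sub_zero] at this

lemma X_dvd_cancel {i : Fin n} {a w : PolyR n} (hw : g i w ≠ 0)
    (h : X i ∣ w * a) : X i ∣ a := by
  rw [X_dvd_iff_g] at h ⊢
  rw [map_mul] at h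
  exact (mul_eq_zero.mp h).resolve_left hw

lemma prod_X_dvd {S : Finset (Fin n)} {a : PolyR n} (h : ∀ i ∈ S, X i ∣ a) :
    (∏ i ∈ S, X i) ∣ a := by
  classical
  induction S using Finset.induction generalizing a with
  | empty => simpa using dvd_refl a
  | insert i S hiS ih =>
      obtain ⟨b, rfl⟩ := h i (Finset.mem_insert_self i S)
      rw [Finset.prod_insert hiS]
      refine mul_dvd_mul_left _ (ih fun j hj => ?_)
      have hji : j ≠ i := fun hh => hiS (hh ▸ hj)
      have := h j (Finset.mem_insert_of_mem hj)
      rw [X_dvd_iff_g, map_mul, g_X_ne hji.symm] at this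
      rw [X_dvd_iff_g]
      have hXi : (X i : PolyR n) ≠ 0 := X_ne_zero i
      exact (mul_eq_zero.mp this).resolve_left hXi

lemma g_prod_erase_ne_zero (i : Fin n) :
    g i (∏ k ∈ Finset.univ.erase i, X k) ≠ 0 := by
  rw [map_prod]
  rw [Finset.prod_congr rfl (fun k hk => g_X_ne (Finset.ne_of_mem_erase hk))]
  exact Finset.prod_ne_zero_iff.mpr fun k _ => X_ne_zero k

lemma pderiv_prod_of_not_mem {j : Fin n} {s : Finset (Fin n)} (h : j ∉ s) :
    pderiv j (∏ k ∈ s, (X k : PolyR n)) = 0 := by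
  classical
  induction s using Finset.induction with
  | empty => simp
  | insert t s hts ih =>
      rw [Finset.prod_insert hts, pderiv_mul,
        pderiv_X_of_ne (fun hh : t = j => h (hh ▸ Finset.mem_insert_self t s)),
        ih (fun hh => h (Finset.mem_insert_of_mem hh))]
      ring

lemma pderiv_prod_univ (j : Fin n) :
    pderiv j (∏ k, (X k : PolyR n)) = ∏ k ∈ Finset.univ.erase j, X k := by
  rw [← Finset.mul_prod_erase Finset.univ _ (Finset.mem_univ j), pderiv_mul, pderiv_X_self,
    pderiv_prod_of_not_mem (Finset.notMem_erase j _)]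
  ring

end Poly

variable {n : ℕ}

def θ (i : Fin n) : ExtE n := ExteriorAlgebra.ι (PolyR n) (Pi.single i 1)

def θL : List (Fin n) → ExtE n
  | [] => 1
  | i :: l => θ i * θL l

@[simp] lemma θL_nil : θL ([] : List (Fin n)) = 1 := rfl
@[simp] lemma θL_cons (i : Fin n) (l : List (Fin n)) : θL (i :: l) = θ i * θL l := rfl

def θS (S : Finset (Fin n)) : ExtE n := θL (S.sort (· ≤ ·))

def ct (i : Fin n) : ExtE n →ₗ[PolyR n] ExtE n :=
  CliffordAlgebra.contractLeft (LinearMap.proj i)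

lemma ct_ι_mul (i : Fin n) (m : Fin n → PolyR n) (x : ExtE n) :
    ct i (ExteriorAlgebra.ι (PolyR n) m * x)
      = m i • x - ExteriorAlgebra.ι (PolyR n) m * ct i x :=
  CliffordAlgebra.contractLeft_ι_mul _ _ _

lemma ct_θ_mul (i j : Fin n) (x : ExtE n) :
    ct i (θ j * x) = (if i = j then (1 : PolyR n) else 0) • x - θ j * ct i x := by
  rw [θ, ct_ι_mul, Pi.single_apply]

@[simp] lemma ct_one (i : Fin n) : ct i (1 : ExtE n) = 0 :=
  CliffordAlgebra.contractLeft_one _ _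

lemma ct_θL_not_mem {i : Fin n} : ∀ {l : List (Fin n)}, i ∉ l → ct i (θL l) = 0
  | [], _ => ct_one i
  | j :: l, h => by
      have hij : i ≠ j := fun hh => h (hh ▸ List.mem_cons_self (a := j) (l := l))
      have hil : i ∉ l := fun hh => h (List.mem_cons_of_mem _ hh)
      rw [θL_cons, ct_θ_mul, if_neg hij, zero_smul, ct_θL_not_mem hil, mul_zero, zero_sub,
        neg_zero]

lemma ct_θL_mem {i : Fin n} : ∀ {l : List (Fin n)}, l.Nodup → i ∈ l →
    ∃ c : PolyR n, ct i (θL l) = c • θL (l.erase i)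
  | [], _, h => absurd h List.not_mem_nil
  | j :: l, hnd, h => by
      rcases eq_or_ne i j with rfl | hij
      · refine ⟨1, ?_⟩
        have hil : i ∉ l := (List.nodup_cons.mp hnd).1
        rw [θL_cons, ct_θ_mul, if_pos rfl, one_smul, ct_θL_not_mem hil, mul_zero, sub_zero,
          List.erase_cons_head, one_smul]
      · have hil : i ∈ l := (List.mem_cons.mp h).resolve_left hij
        obtain ⟨c, hc⟩ := ct_θL_mem (List.nodup_cons.mp hnd).2 hil
        refine ⟨-c, ?_⟩
        have he : (j :: l).erase i = j :: l.erase i := by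
          rw [List.erase_cons]; simp [hij.symm]
        rw [θL_cons, ct_θ_mul, if_neg hij, zero_smul, zero_sub, hc, mul_smul_comm, he, θL_cons,
          neg_smul]

def cFull : List (Fin n) → ExtE n →ₗ[PolyR n] ExtE n
  | [] => LinearMap.id
  | i :: l => (cFull l).comp (ct i)

@[simp] lemma cFull_nil (x : ExtE n) : cFull [] x = x := rfl
@[simp] lemma cFull_cons (i : Fin n) (l : List (Fin n)) (x : ExtE n) :
    cFull (i :: l) x = cFull l (ct i x) := rfl

lemma cFull_not_subset : ∀ {l m : List (Fin n)}, m.Nodup → ¬ l ⊆ m → cFull l (θL m) = 0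
  | [], m, _, h => absurd (List.nil_subset m) h
  | i :: l, m, hm, h => by
      by_cases him : i ∈ m
      · obtain ⟨c, hc⟩ := ct_θL_mem hm him
        rw [cFull_cons, hc, map_smul, cFull_not_subset (hm.erase i) ?_, smul_zero]
        intro hsub
        exact h fun j hj => by
          rcases List.mem_cons.mp hj with rfl | hj
          · exact him
          · exact List.erase_subset (hsub hj)
      · rw [cFull_cons, ct_θL_not_mem him, map_zero]

lemma cFull_subset : ∀ {l m : List (Fin n)}, m.Nodup → l.Nodup → l ⊆ m →
    ∃ c : PolyR n, cFull l (θL m) = c • θL (m.diff l)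
  | [], m, _, _, _ => ⟨1, by simp⟩
  | i :: l, m, hm, hl, hsub => by
      have him : i ∈ m := hsub List.mem_cons_self
      obtain ⟨c, hc⟩ := ct_θL_mem hm him
      have hl' : l.Nodup := (List.nodup_cons.mp hl).2
      have hil : i ∉ l := (List.nodup_cons.mp hl).1
      have hsub' : l ⊆ m.erase i := fun j hj =>
        (List.mem_erase_of_ne (fun hh : j = i => hil (hh ▸ hj))).mpr
          (hsub (List.mem_cons_of_mem _ hj))
      obtain ⟨c', hc'⟩ := cFull_subset (hm.erase i) hl' hsub'
      exact ⟨c * c', by rw [cFull_cons, hc, map_smul, hc', List.diff_cons, smul_smul]⟩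

lemma cFull_self : ∀ {l : List (Fin n)}, l.Nodup → cFull l (θL l) = 1
  | [], _ => rfl
  | i :: l, hl => by
      have hil : i ∉ l := (List.nodup_cons.mp hl).1
      rw [cFull_cons, θL_cons, ct_θ_mul, if_pos rfl, one_smul, ct_θL_not_mem hil, mul_zero,
        sub_zero, cFull_self (List.nodup_cons.mp hl).2]

def coeffF (S : Finset (Fin n)) : ExtE n →ₗ[PolyR n] PolyR n :=
  (ExteriorAlgebra.algebraMapInv).toLinearMap.comp (cFull (S.sort (· ≤ ·)))

@[simp] lemma amInv_θ (j : Fin n) :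
    ExteriorAlgebra.algebraMapInv (θ j : ExtE n) = 0 := by
  rw [θ]; simp [ExteriorAlgebra.algebraMapInv]

lemma coeffF_θS_self (S : Finset (Fin n)) : coeffF S (θS S) = 1 := by
  rw [coeffF, LinearMap.comp_apply, θS, cFull_self (Finset.sort_nodup _ _),
    AlgHom.toLinearMap_apply]
  exact map_one _

lemma coeffF_θS_ne {S T : Finset (Fin n)} (h : S ≠ T) : coeffF S (θS T) = 0 := by
  rw [coeffF, LinearMap.comp_apply, θS]
  by_cases hsub : S.sort (· ≤ ·) ⊆ T.sort (· ≤ ·)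
  · obtain ⟨c, hc⟩ := cFull_subset (Finset.sort_nodup _ _) (Finset.sort_nodup _ _) hsub
    have hne : (T.sort (· ≤ ·)).diff (S.sort (· ≤ ·)) ≠ [] := by
      intro h0
      apply h
      apply Finset.Subset.antisymm
      · intro a ha
        exact Finset.mem_sort (α := Fin n) (· ≤ ·) |>.mp
          (hsub ((Finset.mem_sort (· ≤ ·)).mpr ha))
      · intro a ha
        by_contra haS
        have : a ∈ (T.sort (· ≤ ·)).diff (S.sort (· ≤ ·)) :=
          List.mem_diff_of_mem ((Finset.mem_sort (· ≤ ·)).mpr ha)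
            (fun hh => haS ((Finset.mem_sort (· ≤ ·)).mp hh))
        rw [h0] at this
        exact List.not_mem_nil this
    obtain ⟨j, rest, hjr⟩ := List.exists_cons_of_ne_nil hne
    rw [hc, hjr, map_smul, θL_cons, AlgHom.toLinearMap_apply, map_mul, amInv_θ, zero_mul,
      smul_zero]
  · rw [cFull_not_subset (Finset.sort_nodup _ _) hsub, map_zero]


lemma θ_mul_θL_of_mem (j : Fin n) : ∀ {l : List (Fin n)}, j ∈ l → θ j * θL l = 0
  | [], h => absurd h List.not_mem_nil
  | k :: l, h => by
      rcases eq_or_ne j k with rfl | hjk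
      · rw [θL_cons, ← mul_assoc, θ, ExteriorAlgebra.ι_sq_zero, zero_mul]
      · have hjl : j ∈ l := (List.mem_cons.mp h).resolve_left hjk
        have hsw : θ j * θ k = -(θ k * θ j) :=
          eq_neg_of_add_eq_zero_left (ExteriorAlgebra.ι_add_mul_swap _ _)
        rw [θL_cons, ← mul_assoc, hsw, neg_mul, mul_assoc, θ_mul_θL_of_mem j hjl, mul_zero,
          neg_zero]

lemma θL_perm : ∀ {l l' : List (Fin n)}, l.Perm l' → ∃ c : PolyR n, θL l = c • θL l' := by
  intro l l' h
  induction h with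
  | nil => exact ⟨1, (one_smul _ _).symm⟩
  | cons x _ ih =>
      obtain ⟨c, hc⟩ := ih
      exact ⟨c, by rw [θL_cons, hc, θL_cons, mul_smul_comm]⟩
  | swap x y l =>
      refine ⟨-1, ?_⟩
      have hsw : θ y * θ x = -(θ x * θ y) :=
        eq_neg_of_add_eq_zero_left (ExteriorAlgebra.ι_add_mul_swap _ _)
      rw [θL_cons, θL_cons, ← mul_assoc, hsw, θL_cons, θL_cons, ← mul_assoc, neg_one_smul,
        neg_mul]
  | trans _ _ ih1 ih2 =>
      obtain ⟨c1, hc1⟩ := ih1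
      obtain ⟨c2, hc2⟩ := ih2
      exact ⟨c1 * c2, by rw [hc1, hc2, smul_smul]⟩

def spanθ (n : ℕ) : Submodule (PolyR n) (ExtE n) :=
  Submodule.span (PolyR n) (Set.range θS)

lemma θS_mem_spanθ (S : Finset (Fin n)) : θS S ∈ spanθ n :=
  Submodule.subset_span ⟨S, rfl⟩

lemma one_mem_spanθ : (1 : ExtE n) ∈ spanθ n := by
  have : θS (∅ : Finset (Fin n)) = 1 := by rw [θS, Finset.sort_empty, θL_nil]
  exact this ▸ θS_mem_spanθ ∅

lemma θ_mul_mem_spanθ (j : Fin n) {x : ExtE n} (hx : x ∈ spanθ n) : θ j * x ∈ spanθ n := by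
  induction hx using Submodule.span_induction with
  | mem x hxm =>
      obtain ⟨T, rfl⟩ := hxm
      by_cases hjT : j ∈ T
      · rw [θS, θ_mul_θL_of_mem j ((Finset.mem_sort (· ≤ ·)).mpr hjT)]
        exact (spanθ n).zero_mem
      · have hperm : (j :: T.sort (· ≤ ·)).Perm ((insert j T).sort (· ≤ ·)) := by
          rw [← Multiset.coe_eq_coe]
          show (j ::ₘ (T.sort (· ≤ ·) : Multiset (Fin n))) = _
          rw [Finset.sort_eq, Finset.sort_eq, Finset.insert_val_of_notMem hjT]
        obtain ⟨c, hc⟩ := θL_perm hperm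
        have : θ j * θS T = c • θS (insert j T) := hc
        rw [this]
        exact (spanθ n).smul_mem c (θS_mem_spanθ _)
  | zero => rw [mul_zero]; exact (spanθ n).zero_mem
  | add x y _ _ hx hy => rw [mul_add]; exact (spanθ n).add_mem hx hy
  | smul c x _ hx => rw [mul_smul_comm]; exact (spanθ n).smul_mem c hx

lemma θL_mul_mem_spanθ : ∀ (l : List (Fin n)) {x : ExtE n}, x ∈ spanθ n → θL l * x ∈ spanθ n
  | [], x, hx => by rwa [θL_nil, one_mul]
  | j :: l, x, hx => by
      rw [θL_cons, mul_assoc]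
      exact θ_mul_mem_spanθ j (θL_mul_mem_spanθ l hx)

lemma mul_mem_spanθ {x y : ExtE n} (hx : x ∈ spanθ n) (hy : y ∈ spanθ n) :
    x * y ∈ spanθ n := by
  induction hx using Submodule.span_induction with
  | mem x hxm => obtain ⟨T, rfl⟩ := hxm; exact θL_mul_mem_spanθ _ hy
  | zero => rw [zero_mul]; exact (spanθ n).zero_mem
  | add a b _ _ ha hb => rw [add_mul]; exact (spanθ n).add_mem ha hb
  | smul c a _ ha => rw [smul_mul_assoc]; exact (spanθ n).smul_mem c ha

lemma mem_spanθ (x : ExtE n) : x ∈ spanθ n := by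
  induction x using ExteriorAlgebra.induction with
  | algebraMap r =>
      rw [Algebra.algebraMap_eq_smul_one]
      exact (spanθ n).smul_mem r one_mem_spanθ
  | ι m =>
      have hm : m = ∑ i, Pi.single i (m i) := by
        ext j
        rw [Finset.sum_apply]
        simp [Pi.single_apply]
      rw [hm, map_sum]
      refine Submodule.sum_mem _ fun i _ => ?_
      have h2 : θS {i} = θ i := by rw [θS, Finset.sort_singleton, θL_cons, θL_nil, mul_one]
      have h1 : ExteriorAlgebra.ι (PolyR n) (Pi.single i (m i)) = m i • θ i := by
        rw [θ, ← map_smul]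
        congr 1
        ext j
        rcases eq_or_ne j i with rfl | h
        · simp
        · simp [Pi.single_apply, h]
      rw [h1]
      exact (spanθ n).smul_mem _ (h2 ▸ θS_mem_spanθ {i})
  | mul a b ha hb => exact mul_mem_spanθ ha hb
  | add a b ha hb => exact (spanθ n).add_mem ha hb

lemma exists_repr (x : ExtE n) :
    ∃ a : Finset (Fin n) → PolyR n, x = ∑ S, a S • θS S := by
  have hx := mem_spanθ x
  rw [spanθ, Submodule.mem_span_range_iff_exists_fun] at hx
  obtain ⟨c, hc⟩ := hx
  exact ⟨c, hc.symm⟩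

lemma coeffF_repr (a : Finset (Fin n) → PolyR n) (S : Finset (Fin n)) :
    coeffF S (∑ T, a T • θS T) = a S := by
  rw [map_sum]
  rw [Finset.sum_eq_single S]
  · rw [map_smul, coeffF_θS_self, smul_eq_mul, mul_one]
  · intro T _ hT
    rw [map_smul, coeffF_θS_ne (Ne.symm hT), smul_eq_mul, mul_zero]
  · intro h; exact absurd (Finset.mem_univ S) h


lemma sort_erase (T : Finset (Fin n)) (j : Fin n) :
    (T.sort (· ≤ ·)).erase j = (T.erase j).sort (· ≤ ·) := by
  refine List.Perm.eq_of_pairwise'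
    (List.Pairwise.sublist List.erase_sublist (Finset.pairwise_sort _ (· ≤ ·)))
    (Finset.pairwise_sort _ (· ≤ ·)) ?_
  rw [← Multiset.coe_eq_coe, ← Multiset.coe_erase, Finset.sort_eq, Finset.sort_eq,
    ← Finset.erase_val]

lemma ct_θS_not_mem {j : Fin n} {T : Finset (Fin n)} (h : j ∉ T) : ct j (θS T) = 0 :=
  ct_θL_not_mem (fun hh => h ((Finset.mem_sort (α := Fin n) (· ≤ ·)).mp hh))

lemma ct_θS_mem {j : Fin n} {T : Finset (Fin n)} (h : j ∈ T) :
    ∃ c : PolyR n, ct j (θS T) = c • θS (T.erase j) := by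
  obtain ⟨c, hc⟩ := ct_θL_mem (Finset.sort_nodup _ _) ((Finset.mem_sort (α := Fin n) (· ≤ ·)).mpr h)
  exact ⟨c, by rw [θS, hc, sort_erase, θS]⟩

lemma iotaDW_eq (n : ℕ) :
    iotaDW n = ∑ j, MvPolynomial.pderiv j (Wzero n) • KAux.ct j := by
  rw [iotaDW, dWdual, map_sum]
  refine Finset.sum_congr rfl fun j _ => ?_
  rw [map_smul]; rfl

lemma fMap_θ (j : Fin n) : fMap n (θ j) = (MvPolynomial.X j : PolyR n) • θ j := by
  rw [θ, fMap, ExteriorAlgebra.lift_ι_apply, LinearMap.comp_apply, ← map_smul]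
  congr 1
  ext i
  rcases eq_or_ne i j with rfl | h
  · simp
  · simp [Pi.single_apply, h]

lemma fMap_θL : ∀ (l : List (Fin n)),
    fMap n (θL l) = ((l.map (MvPolynomial.X : Fin n → PolyR n)).prod) • θL l
  | [] => by simp
  | j :: l => by
      rw [θL_cons, map_mul, fMap_θ, fMap_θL l, smul_mul_smul_comm, List.map_cons,
        List.prod_cons]

lemma fMap_θS (S : Finset (Fin n)) :
    fMap n (θS S) = ((∏ i ∈ S, MvPolynomial.X i : PolyR n)) • θS S := by
  rw [θS, fMap_θL]
  congr 1
  rw [Finset.prod_eq_multiset_prod, ← Finset.sort_eq S (· ≤ ·), Multiset.map_coe,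
    Multiset.prod_coe]

lemma X_dvd_coeffF_iota {S : Finset (Fin n)} {i : Fin n} (hi : i ∈ S) (y : ExtE n) :
    MvPolynomial.X i ∣ coeffF S (iotaDW n y) := by
  rw [← Ideal.mem_span_singleton]
  have hle : spanθ n ≤ Submodule.comap ((coeffF S).comp (iotaDW n))
      (Ideal.span {MvPolynomial.X i}) := by
    rw [spanθ, Submodule.span_le]
    rintro _ ⟨T, rfl⟩
    simp only [Set.mem_setOf_eq, SetLike.mem_coe, Submodule.mem_comap, LinearMap.comp_apply]
    rw [Ideal.mem_span_singleton, iotaDW_eq, LinearMap.sum_apply, map_sum]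
    refine Finset.dvd_sum fun j _ => ?_
    rw [LinearMap.smul_apply, map_smul, smul_eq_mul]
    by_cases hjT : j ∈ T
    · obtain ⟨c, hc⟩ := ct_θS_mem hjT
      rw [hc, map_smul, smul_eq_mul]
      by_cases hTS : T.erase j = S
      · have hji : j ≠ i := by
          rintro rfl
          rw [← hTS] at hi
          exact (Finset.notMem_erase j T) hi
        refine dvd_mul_of_dvd_left ?_ _
        rw [Wzero, map_neg, pderiv_prod_univ, dvd_neg]
        exact Finset.dvd_prod_of_mem _ (Finset.mem_erase.mpr ⟨hji.symm, Finset.mem_univ i⟩)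
      · rw [coeffF_θS_ne (fun hh => hTS hh.symm), mul_zero, mul_zero]
        exact dvd_zero _
    · rw [ct_θS_not_mem hjT, map_zero, mul_zero]
      exact dvd_zero _
  exact hle (mem_spanθ y)

end KAux

/-- the kernel of the contraction `ι_{dW₀}` is contained in the image of `f`. -/
theorem ker_contract_subset_range_f (n : ℕ) (hn : 1 ≤ n) (x : ExtE n)
    (hx : iotaDW n x = 0) : x ∈ (fMap n).range := by
  classical
  obtain ⟨a, ha⟩ := KAux.exists_repr x
  have hcoeff : ∀ S, KAux.coeffF S x = a S := fun S => by rw [ha, KAux.coeffF_repr]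
  have hdvd : ∀ S : Finset (Fin n), (∏ i ∈ S, MvPolynomial.X i) ∣ a S := by
    intro S
    refine KAux.prod_X_dvd fun i hi => ?_
    have h3 : dWdual n (Pi.single i 1) = MvPolynomial.pderiv i (Wzero n) := by
      rw [dWdual, LinearMap.sum_apply, Finset.sum_eq_single i]
      · simp
      · intro j _ hj
        simp [Pi.single_apply, hj]
      · intro h; exact absurd (Finset.mem_univ i) h
    have h1 : iotaDW n (KAux.θ i * x) = MvPolynomial.pderiv i (Wzero n) • x := by
      rw [iotaDW, KAux.θ, CliffordAlgebra.contractLeft_ι_mul,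
        show CliffordAlgebra.contractLeft (dWdual n) x = 0 from hx, mul_zero, sub_zero, h3]
    have h5 := KAux.X_dvd_coeffF_iota (S := S) hi (KAux.θ i * x)
    rw [h1, map_smul, smul_eq_mul, hcoeff S, Wzero, map_neg, KAux.pderiv_prod_univ, neg_mul,
      dvd_neg] at h5
    exact KAux.X_dvd_cancel (KAux.g_prod_erase_ne_zero i) h5
  choose b hb using hdvd
  have key : (fMap n).toLinearMap (∑ S, b S • KAux.θS S) = x := by
    rw [map_sum, ha]
    refine Finset.sum_congr rfl fun S _ => ?_
    rw [map_smul, AlgHom.toLinearMap_apply, KAux.fMap_θS, smul_smul, hb S, mul_comm]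
  exact ⟨_, key⟩


end
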